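/- Let A be an invertible linear map of ℝ^d with A-invariant linear subspaces W^{ss} and W^{ws}, and let constants 0 < μ̄ < μ < ν < 1 be given. Let F : ℝ^d → ℝ^d and H : ℝ^d → ℝ^d be bijections with H ∘ F = A ∘ H and sup_{x∈ℝ^d} ‖H(x) − x‖ ≤ C for some C ≥ 0. Assume: (i) for all x, y ∈ ℝ^d with H(y) − H(x) ∈ W^{ws} there exists M ≥ 0 such that ‖F^{−n}(x) − F^{−n}(y)‖ ≤ M·ν^{−n} for all n ≥ 0; (ii) for all x ≠ y in ℝ^d with H(y) − H(x) ∈ W^{ss} there exist c > 0 and c' ≥ 0 such that ‖F^{−n}(x) − F^{−n}(y)‖ ≥ c·μ̄^{−n} − c' for all n ≥ 0. Then every complex eigenvalue of the restriction of A to W^{ws} has absolute value strictly greater than μ, and every complex eigenvalue of the restriction of A to W^{ss} has absolute value strictly less than μ. -/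

import Mathlib

open Matrix

lemma chp_eval {m : ℕ} (N : Matrix (Fin m) (Fin m) ℂ) (t : ℂ) :
    N.charpoly.eval t = (Matrix.scalar (Fin m) t - N).det := by
  rw [Matrix.charpoly, eval_det, Matrix.matPolyEquiv_charmatrix]
  simp

lemma eig_aux {d : ℕ} (A : (Fin d → ℝ) ≃ₗ[ℝ] (Fin d → ℝ))
    (W : Submodule ℝ (Fin d → ℝ)) (hW : ∀ x ∈ W, A.toLinearMap x ∈ W) (lam : ℂ)
    (hroot : ((A.toLinearMap.restrict hW).charpoly.map (algebraMap ℝ ℂ)).IsRoot lam) :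
    ∃ u w : Fin d → ℝ, u ∈ W ∧ w ∈ W ∧ ¬(u = 0 ∧ w = 0) ∧
      ∀ ζ : ℂ, A (ζ.re • u - ζ.im • w) = (lam * ζ).re • u - (lam * ζ).im • w := by
  classical
  set B := A.toLinearMap.restrict hW with hB
  set b := Module.finBasis ℝ W with hb
  set M := LinearMap.toMatrix b b B with hM
  have hchar : B.charpoly = M.charpoly := (B.charpoly_toMatrix b).symm
  have hroot' : ((M.map (algebraMap ℝ ℂ)).charpoly).IsRoot lam := by
    rw [Matrix.charpoly_map, ← hchar]; exact hroot
  have hdet : (Matrix.scalar (Fin _) lam - M.map (algebraMap ℝ ℂ)).det = 0 := by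
    rw [← chp_eval]; exact hroot'
  obtain ⟨z, hz0, hz⟩ := Matrix.exists_mulVec_eq_zero_iff.2 hdet
  have hzeig : (M.map (algebraMap ℝ ℂ)) *ᵥ z = lam • z := by
    have h1 : Matrix.scalar (Fin _) lam *ᵥ z - (M.map (algebraMap ℝ ℂ)) *ᵥ z = 0 := by
      rw [← Matrix.sub_mulVec]; exact hz
    have h2 : Matrix.scalar (Fin _) lam *ᵥ z = lam • z := by
      ext j; simp [Matrix.scalar_apply, Matrix.mulVec_diagonal]
    rw [h2] at h1
    exact (sub_eq_zero.1 h1).symm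
  set zre : Fin _ → ℝ := fun j => (z j).re with hzre
  set zim : Fin _ → ℝ := fun j => (z j).im with hzim
  have hexp : ∀ j, ((M.map (algebraMap ℝ ℂ)) *ᵥ z) j = (∑ k, (M j k : ℂ) * z k) := by
    intro j
    simp [Matrix.mulVec, dotProduct, Matrix.map_apply]
  have hre : M *ᵥ zre = lam.re • zre - lam.im • zim := by
    ext j
    have hj := congrFun hzeig j
    rw [hexp j] at hj
    have := congrArg Complex.re hj
    simpa [Complex.re_sum, Complex.mul_re, Matrix.mulVec, dotProduct,
      mul_comm, add_comm] using this
  have him : M *ᵥ zim = lam.im • zre + lam.re • zim := by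
    ext j
    have hj := congrFun hzeig j
    rw [hexp j] at hj
    have := congrArg Complex.im hj
    simpa [Complex.im_sum, Complex.mul_im, Matrix.mulVec, dotProduct,
      mul_comm, add_comm] using this
  have key : ∀ v : Fin _ → ℝ, B (b.equivFun.symm v) = b.equivFun.symm (M *ᵥ v) := by
    intro v
    have h2 : ⇑(b.repr (b.equivFun.symm v)) = v := by
      rw [← b.equivFun_apply, b.equivFun.apply_symm_apply]
    have h1 := LinearMap.toMatrix_mulVec_repr b b B (b.equivFun.symm v)
    rw [h2] at h1
    apply b.equivFun.injective
    rw [b.equivFun.apply_symm_apply, b.equivFun_apply, ← h1]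
  set U : W := b.equivFun.symm zre with hU
  set V : W := b.equivFun.symm zim with hV
  have hBU : B U = lam.re • U - lam.im • V := by
    show B (b.equivFun.symm zre) = _
    rw [key, hre, map_sub, LinearEquiv.map_smul, LinearEquiv.map_smul]
  have hBV : B V = lam.im • U + lam.re • V := by
    show B (b.equivFun.symm zim) = _
    rw [key, him, map_add, LinearEquiv.map_smul, LinearEquiv.map_smul]
  refine ⟨(U : Fin d → ℝ), (V : Fin d → ℝ), U.2, V.2, ?_, ?_⟩
  · rintro ⟨hu0, hv0⟩
    apply hz0
    have hU0 : U = 0 := Subtype.ext hu0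
    have hV0 : V = 0 := Subtype.ext hv0
    have h1 : zre = 0 := by
      have := congrArg b.equivFun hU0
      rwa [b.equivFun.apply_symm_apply, map_zero] at this
    have h2 : zim = 0 := by
      have := congrArg b.equivFun hV0
      rwa [b.equivFun.apply_symm_apply, map_zero] at this
    funext j
    have e1 : (z j).re = 0 := congrFun h1 j
    have e2 : (z j).im = 0 := congrFun h2 j
    exact Complex.ext e1 e2
  · intro ζ
    have hAU : A.toLinearMap (U : Fin d → ℝ)
        = lam.re • (U : Fin d → ℝ) - lam.im • (V : Fin d → ℝ) := by
      simpa [hB, LinearMap.restrict_coe_apply] using congrArg Subtype.val hBU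
    have hAV : A.toLinearMap (V : Fin d → ℝ)
        = lam.im • (U : Fin d → ℝ) + lam.re • (V : Fin d → ℝ) := by
      simpa [hB, LinearMap.restrict_coe_apply] using congrArg Subtype.val hBV
    have hmap : A.toLinearMap (ζ.re • (U : Fin d → ℝ) - ζ.im • (V : Fin d → ℝ))
        = ζ.re • A.toLinearMap (U : Fin d → ℝ) - ζ.im • A.toLinearMap (V : Fin d → ℝ) := by
      rw [map_sub, LinearMap.map_smul, LinearMap.map_smul]
    show A.toLinearMap _ = _
    rw [hmap, hAU, hAV, Complex.mul_re, Complex.mul_im]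
    module

/-- Upper norm bound for the "complex plane" map. -/
lemma g_upper {d : ℕ} (u w : Fin d → ℝ) (ζ : ℂ) :
    ‖ζ.re • u - ζ.im • w‖ ≤ (‖u‖ + ‖w‖) * ‖ζ‖ := by
  have h1 : ‖ζ.re • u - ζ.im • w‖ ≤ ‖ζ.re • u‖ + ‖ζ.im • w‖ := norm_sub_le _ _
  rw [norm_smul, norm_smul, Real.norm_eq_abs, Real.norm_eq_abs] at h1
  have h2 : |ζ.re| ≤ ‖ζ‖ := Complex.abs_re_le_norm ζ
  have h3 : |ζ.im| ≤ ‖ζ‖ := Complex.abs_im_le_norm ζ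
  have h4 : |ζ.re| * ‖u‖ ≤ ‖ζ‖ * ‖u‖ :=
    mul_le_mul_of_nonneg_right h2 (norm_nonneg u)
  have h5 : |ζ.im| * ‖w‖ ≤ ‖ζ‖ * ‖w‖ :=
    mul_le_mul_of_nonneg_right h3 (norm_nonneg w)
  nlinarith [norm_nonneg u, norm_nonneg w]

/-- Lower norm bound for the "complex plane" map. -/
lemma g_lower {d : ℕ} (u w : Fin d → ℝ) (ζ : ℂ) :
    max ‖u‖ ‖w‖ * ‖ζ‖ ≤
      ‖ζ.re • u - ζ.im • w‖ + ‖(Complex.I * ζ).re • u - (Complex.I * ζ).im • w‖ := by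
  rcases eq_or_ne ζ 0 with rfl | hζ
  · simp
  set g1 := ζ.re • u - ζ.im • w with hg1
  set g2 := (Complex.I * ζ).re • u - (Complex.I * ζ).im • w with hg2
  have habs : 0 < ‖ζ‖ := by simpa using hζ
  have hsq : ζ.re ^ 2 + ζ.im ^ 2 = ‖ζ‖ ^ 2 := by
    rw [Complex.sq_norm, Complex.normSq_apply]; ring
  have e1 : ζ.re • g1 - ζ.im • g2 = (ζ.re ^ 2 + ζ.im ^ 2) • u := by
    rw [hg1, hg2]
    simp only [Complex.mul_re, Complex.mul_im, Complex.I_re, Complex.I_im]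
    module
  have e2 : ζ.im • g1 + ζ.re • g2 = -((ζ.re ^ 2 + ζ.im ^ 2) • w) := by
    rw [hg1, hg2]
    simp only [Complex.mul_re, Complex.mul_im, Complex.I_re, Complex.I_im]
    module
  have hb1 : (ζ.re ^ 2 + ζ.im ^ 2) * ‖u‖ ≤ ‖ζ‖ * (‖g1‖ + ‖g2‖) := by
    have := norm_sub_le (ζ.re • g1) (ζ.im • g2)
    calc (ζ.re ^ 2 + ζ.im ^ 2) * ‖u‖ = ‖(ζ.re ^ 2 + ζ.im ^ 2) • u‖ := by
          rw [norm_smul, Real.norm_eq_abs, abs_of_nonneg (by positivity)]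
      _ = ‖ζ.re • g1 - ζ.im • g2‖ := by rw [e1]
      _ ≤ ‖ζ.re • g1‖ + ‖ζ.im • g2‖ := norm_sub_le _ _
      _ = |ζ.re| * ‖g1‖ + |ζ.im| * ‖g2‖ := by
          rw [norm_smul, norm_smul, Real.norm_eq_abs, Real.norm_eq_abs]
      _ ≤ ‖ζ‖ * ‖g1‖ + ‖ζ‖ * ‖g2‖ := by
          gcongr
          · exact Complex.abs_re_le_norm ζ
          · exact Complex.abs_im_le_norm ζ
      _ = ‖ζ‖ * (‖g1‖ + ‖g2‖) := by ring
  have hb2 : (ζ.re ^ 2 + ζ.im ^ 2) * ‖w‖ ≤ ‖ζ‖ * (‖g1‖ + ‖g2‖) := by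
    calc (ζ.re ^ 2 + ζ.im ^ 2) * ‖w‖ = ‖(ζ.re ^ 2 + ζ.im ^ 2) • w‖ := by
          rw [norm_smul, Real.norm_eq_abs, abs_of_nonneg (by positivity)]
      _ = ‖ζ.im • g1 + ζ.re • g2‖ := by rw [e2, norm_neg]
      _ ≤ ‖ζ.im • g1‖ + ‖ζ.re • g2‖ := norm_add_le _ _
      _ = |ζ.im| * ‖g1‖ + |ζ.re| * ‖g2‖ := by
          rw [norm_smul, norm_smul, Real.norm_eq_abs, Real.norm_eq_abs]
      _ ≤ ‖ζ‖ * ‖g1‖ + ‖ζ‖ * ‖g2‖ := by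
          gcongr
          · exact Complex.abs_im_le_norm ζ
          · exact Complex.abs_re_le_norm ζ
      _ = ‖ζ‖ * (‖g1‖ + ‖g2‖) := by ring
  rw [hsq] at hb1 hb2
  rcases max_cases ‖u‖ ‖w‖ with ⟨hm, _⟩ | ⟨hm, _⟩ <;> rw [hm]
  · nlinarith
  · nlinarith

theorem stmt_6 (d : ℕ) (A : (Fin d → ℝ) ≃ₗ[ℝ] (Fin d → ℝ))
    (Wss Wws : Submodule ℝ (Fin d → ℝ))
    (hWss : ∀ x ∈ Wss, A.toLinearMap x ∈ Wss)
    (hWws : ∀ x ∈ Wws, A.toLinearMap x ∈ Wws)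
    (μbar μ ν : ℝ) (h1 : 0 < μbar) (h2 : μbar < μ) (h3 : μ < ν) (h4 : ν < 1)
    (F H : (Fin d → ℝ) ≃ (Fin d → ℝ)) (C : ℝ) (hC : 0 ≤ C)
    (hconj : ∀ x, H (F x) = A (H x))
    (hbd : ∀ x, ‖H x - x‖ ≤ C)
    (hws : ∀ x y : Fin d → ℝ, H y - H x ∈ Wws →
      ∃ M : ℝ, 0 ≤ M ∧ ∀ n : ℕ,
        ‖(⇑F.symm)^[n] x - (⇑F.symm)^[n] y‖ ≤ M * (ν ^ n)⁻¹)
    (hss : ∀ x y : Fin d → ℝ, x ≠ y → H y - H x ∈ Wss →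
      ∃ c : ℝ, 0 < c ∧ ∃ c' : ℝ, 0 ≤ c' ∧ ∀ n : ℕ,
        c * (μbar ^ n)⁻¹ - c' ≤ ‖(⇑F.symm)^[n] x - (⇑F.symm)^[n] y‖) :
    (∀ lam : ℂ,
        ((A.toLinearMap.restrict hWws).charpoly.map (algebraMap ℝ ℂ)).IsRoot lam →
        μ < ‖lam‖) ∧
    (∀ lam : ℂ,
        ((A.toLinearMap.restrict hWss).charpoly.map (algebraMap ℝ ℂ)).IsRoot lam →
        ‖lam‖ < μ) := by
  have hμ : 0 < μ := h1.trans h2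
  have hν : 0 < ν := hμ.trans h3
  -- conjugacy for inverses
  have hHF : ∀ t, H (F.symm t) = A.symm (H t) := by
    intro t
    have h := hconj (F.symm t)
    rw [F.apply_symm_apply] at h
    exact ((LinearEquiv.symm_apply_eq A).2 h).symm
  have hIterConj : ∀ (t : Fin d → ℝ) (n : ℕ),
      H ((⇑F.symm)^[n] t) = (⇑A.symm)^[n] (H t) := by
    intro t n
    induction n with
    | zero => simp
    | succ n ih =>
        rw [Function.iterate_succ_apply', Function.iterate_succ_apply', hHF, ih]
  have hzero : ∀ n : ℕ, (⇑A.symm)^[n] (0 : Fin d → ℝ) = 0 :=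
    fun n => Function.iterate_fixed (by simp) n
  have hinv1 : ∀ (a : ℝ), 0 < a → a < 1 → ∀ n : ℕ, (1 : ℝ) ≤ (a ^ n)⁻¹ := by
    intro a ha hb n
    exact (one_le_inv₀ (pow_pos ha n)).2 (pow_le_one₀ ha.le hb.le)
  -- dynamical upper bound on Wws
  have dynU : ∀ v ∈ Wws, ∃ M : ℝ, 0 ≤ M ∧ ∀ n : ℕ,
      ‖(⇑A.symm)^[n] v‖ ≤ M * (ν ^ n)⁻¹ := by
    intro v hv
    obtain ⟨M, hM0, hM⟩ := hws (H.symm 0) (H.symm v)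
      (by rw [H.apply_symm_apply, H.apply_symm_apply, sub_zero]; exact hv)
    refine ⟨M + 2 * C, by linarith, fun n => ?_⟩
    set xn := (⇑F.symm)^[n] (H.symm 0) with hxn
    set yn := (⇑F.symm)^[n] (H.symm v) with hyn
    have hx : H xn = 0 := by rw [hxn, hIterConj, H.apply_symm_apply]; exact hzero n
    have hy : H yn = (⇑A.symm)^[n] v := by rw [hyn, hIterConj, H.apply_symm_apply]
    have e : (⇑A.symm)^[n] v = (H yn - yn) + (yn - xn) + (xn - H xn) := by
      rw [hx, hy]; abel
    have hb1 : ‖H yn - yn‖ ≤ C := hbd yn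
    have hb2 : ‖xn - H xn‖ ≤ C := by rw [norm_sub_rev]; exact hbd xn
    have hb3 : ‖yn - xn‖ ≤ M * (ν ^ n)⁻¹ := by rw [norm_sub_rev]; exact hM n
    have hn1 : (1 : ℝ) ≤ (ν ^ n)⁻¹ := hinv1 ν hν h4 n
    calc ‖(⇑A.symm)^[n] v‖ = ‖(H yn - yn) + (yn - xn) + (xn - H xn)‖ := by rw [← e]
      _ ≤ ‖H yn - yn‖ + ‖yn - xn‖ + ‖xn - H xn‖ := norm_add₃_le
      _ ≤ C + M * (ν ^ n)⁻¹ + C := by linarith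
      _ ≤ (M + 2 * C) * (ν ^ n)⁻¹ := by nlinarith
  -- dynamical lower bound on Wss
  have dynL : ∀ v ∈ Wss, v ≠ 0 → ∃ c : ℝ, 0 < c ∧ ∃ c' : ℝ, 0 ≤ c' ∧ ∀ n : ℕ,
      c * (μbar ^ n)⁻¹ - c' ≤ ‖(⇑A.symm)^[n] v‖ := by
    intro v hv hv0
    have hne : H.symm 0 ≠ H.symm v := by
      intro h
      exact hv0 ((H.symm.injective h) ▸ rfl)
    obtain ⟨c, hc, c', hc', hcc⟩ := hss (H.symm 0) (H.symm v) hne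
      (by rw [H.apply_symm_apply, H.apply_symm_apply, sub_zero]; exact hv)
    refine ⟨c, hc, c' + 2 * C, by linarith, fun n => ?_⟩
    set xn := (⇑F.symm)^[n] (H.symm 0) with hxn
    set yn := (⇑F.symm)^[n] (H.symm v) with hyn
    have hx : H xn = 0 := by rw [hxn, hIterConj, H.apply_symm_apply]; exact hzero n
    have hy : H yn = (⇑A.symm)^[n] v := by rw [hyn, hIterConj, H.apply_symm_apply]
    have e : xn - yn = (xn - H xn) + (H xn - H yn) + (H yn - yn) := by abel
    have hb1 : ‖xn - H xn‖ ≤ C := by rw [norm_sub_rev]; exact hbd xn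
    have hb2 : ‖H yn - yn‖ ≤ C := hbd yn
    have hb3 : ‖H xn - H yn‖ = ‖(⇑A.symm)^[n] v‖ := by
      rw [hx, hy, zero_sub, norm_neg]
    have htri : ‖xn - yn‖ ≤ ‖xn - H xn‖ + ‖H xn - H yn‖ + ‖H yn - yn‖ := by
      rw [e]; exact norm_add₃_le
    have := hcc n
    rw [hb3] at htri
    linarith
  constructor
  · -- Wws : eigenvalues have modulus > μ
    intro lam hroot
    by_contra hcon
    push_neg at hcon
    obtain ⟨u, w, hu, hw, hne, hg⟩ := eig_aux A Wws hWws lam hroot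
    have hg1 : (1 : ℂ).re • u - (1 : ℂ).im • w = u := by simp
    have hgI : (Complex.I).re • u - (Complex.I).im • w = -w := by simp
    have hlam : lam ≠ 0 := by
      rintro rfl
      have e1 : A u = 0 := by
        have := hg 1
        rw [hg1] at this
        simpa using this
      have e2 : A (-w) = 0 := by
        have := hg Complex.I
        rw [hgI] at this
        simpa using this
      refine hne ⟨?_, ?_⟩
      · exact A.map_eq_zero_iff.1 e1
      · have := A.map_eq_zero_iff.1 e2
        simpa using this
    have habs : 0 < ‖lam‖ := by simpa using hlam
    have hsym : ∀ ζ : ℂ, A.symm (ζ.re • u - ζ.im • w)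
        = (lam⁻¹ * ζ).re • u - (lam⁻¹ * ζ).im • w := by
      intro ζ
      have h := hg (lam⁻¹ * ζ)
      rw [← mul_assoc, mul_inv_cancel₀ hlam, one_mul] at h
      rw [← h, A.symm_apply_apply]
    have hiter : ∀ (n : ℕ) (ζ : ℂ), (⇑A.symm)^[n] (ζ.re • u - ζ.im • w)
        = (lam⁻¹ ^ n * ζ).re • u - (lam⁻¹ ^ n * ζ).im • w := by
      intro n
      induction n with
      | zero => intro ζ; simp
      | succ n ih =>
          intro ζ
          rw [Function.iterate_succ_apply, hsym, ih]
          have : lam⁻¹ ^ n * (lam⁻¹ * ζ) = lam⁻¹ ^ (n + 1) * ζ := by ring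
          rw [this]
    obtain ⟨M₁, hM₁0, hM₁⟩ := dynU u hu
    obtain ⟨M₂, hM₂0, hM₂⟩ := dynU (-w) (Wws.neg_mem hw)
    set k := max ‖u‖ ‖w‖ with hk
    have hkpos : 0 < k := by
      rcases not_and_or.1 hne with h | h
      · exact lt_max_of_lt_left (norm_pos_iff.2 h)
      · exact lt_max_of_lt_right (norm_pos_iff.2 h)
    have key : ∀ n : ℕ, k * (μ ^ n)⁻¹ ≤ (M₁ + M₂) * (ν ^ n)⁻¹ := by
      intro n
      set ζn := lam⁻¹ ^ n with hζn
      have e1 : (⇑A.symm)^[n] u = ζn.re • u - ζn.im • w := by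
        have := hiter n 1
        rw [hg1, mul_one] at this
        exact this
      have e2 : (⇑A.symm)^[n] (-w)
          = (Complex.I * ζn).re • u - (Complex.I * ζn).im • w := by
        have := hiter n Complex.I
        rw [hgI, mul_comm] at this
        exact this
      have hlow := g_lower u w ζn
      rw [← e1, ← e2, ← hk] at hlow
      have habsζ : ‖ζn‖ = ((‖lam‖)⁻¹) ^ n := by
        rw [hζn, norm_pow, norm_inv]
      have hmono : (μ ^ n)⁻¹ ≤ ‖ζn‖ := by
        rw [habsζ, ← inv_pow]
        exact pow_le_pow_left₀ (by positivity) (inv_anti₀ habs hcon) n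
      have hsum : ‖(⇑A.symm)^[n] u‖ + ‖(⇑A.symm)^[n] (-w)‖
          ≤ (M₁ + M₂) * (ν ^ n)⁻¹ := by
        have := hM₁ n
        have := hM₂ n
        have : (M₁ + M₂) * (ν ^ n)⁻¹ = M₁ * (ν ^ n)⁻¹ + M₂ * (ν ^ n)⁻¹ := by ring
        rw [this]
        exact add_le_add (hM₁ n) (hM₂ n)
      calc k * (μ ^ n)⁻¹ ≤ k * ‖ζn‖ :=
            mul_le_mul_of_nonneg_left hmono hkpos.le
        _ ≤ ‖(⇑A.symm)^[n] u‖ + ‖(⇑A.symm)^[n] (-w)‖ := hlow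
        _ ≤ (M₁ + M₂) * (ν ^ n)⁻¹ := hsum
    obtain ⟨n, hn⟩ := pow_unbounded_of_one_lt ((M₁ + M₂) / k) ((one_lt_div hμ).2 h3)
    have h5 := key n
    have h6 : k * (μ ^ n)⁻¹ * ν ^ n ≤ (M₁ + M₂) * (ν ^ n)⁻¹ * ν ^ n :=
      mul_le_mul_of_nonneg_right h5 (pow_nonneg hν.le n)
    have h7 : (M₁ + M₂) * (ν ^ n)⁻¹ * ν ^ n = M₁ + M₂ := by
      field_simp
    have h8 : k * (μ ^ n)⁻¹ * ν ^ n = (ν / μ) ^ n * k := by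
      rw [div_pow, div_eq_mul_inv]; ring
    have h9 : M₁ + M₂ < (ν / μ) ^ n * k := by
      rw [div_lt_iff₀ hkpos] at hn
      linarith
    rw [h7, h8] at h6
    linarith
  · -- Wss : eigenvalues have modulus < μ
    intro lam hroot
    by_contra hcon
    push_neg at hcon
    obtain ⟨u, w, hu, hw, hne, hg⟩ := eig_aux A Wss hWss lam hroot
    have hg1 : (1 : ℂ).re • u - (1 : ℂ).im • w = u := by simp
    have hgI : (Complex.I).re • u - (Complex.I).im • w = -w := by simp
    have habs : 0 < ‖lam‖ := lt_of_lt_of_le hμ hcon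
    have hlam : lam ≠ 0 := by
      intro h
      rw [h] at habs
      simp at habs
    have hsym : ∀ ζ : ℂ, A.symm (ζ.re • u - ζ.im • w)
        = (lam⁻¹ * ζ).re • u - (lam⁻¹ * ζ).im • w := by
      intro ζ
      have h := hg (lam⁻¹ * ζ)
      rw [← mul_assoc, mul_inv_cancel₀ hlam, one_mul] at h
      rw [← h, A.symm_apply_apply]
    have hiter : ∀ (n : ℕ) (ζ : ℂ), (⇑A.symm)^[n] (ζ.re • u - ζ.im • w)
        = (lam⁻¹ ^ n * ζ).re • u - (lam⁻¹ ^ n * ζ).im • w := by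
      intro n
      induction n with
      | zero => intro ζ; simp
      | succ n ih =>
          intro ζ
          rw [Function.iterate_succ_apply, hsym, ih]
          have : lam⁻¹ ^ n * (lam⁻¹ * ζ) = lam⁻¹ ^ (n + 1) * ζ := by ring
          rw [this]
    obtain ⟨ζ₀, hζabs, hmem, hvne⟩ : ∃ ζ₀ : ℂ, ‖ζ₀‖ = 1 ∧
        (ζ₀.re • u - ζ₀.im • w) ∈ Wss ∧ (ζ₀.re • u - ζ₀.im • w) ≠ 0 := by
      rcases not_and_or.1 hne with h | h
      · exact ⟨1, by simp, by rw [hg1]; exact hu, by rw [hg1]; exact h⟩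
      · exact ⟨Complex.I, by simp, by rw [hgI]; exact Wss.neg_mem hw,
          by rw [hgI]; exact neg_ne_zero.2 h⟩
    obtain ⟨c, hc, c', hc', hcc⟩ := dynL _ hmem hvne
    set K := ‖u‖ + ‖w‖ with hK
    have hK0 : 0 ≤ K := by positivity
    have key : ∀ n : ℕ, c * (μbar ^ n)⁻¹ ≤ (c' + 2 * C + K) * (μ ^ n)⁻¹ := by
      intro n
      have e1 : (⇑A.symm)^[n] (ζ₀.re • u - ζ₀.im • w)
          = (lam⁻¹ ^ n * ζ₀).re • u - (lam⁻¹ ^ n * ζ₀).im • w := hiter n ζ₀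
      have hup := g_upper u w (lam⁻¹ ^ n * ζ₀)
      have habsζ : ‖(lam⁻¹ ^ n * ζ₀)‖ = ((‖lam‖)⁻¹) ^ n := by
        rw [norm_mul, norm_pow, norm_inv, hζabs, mul_one]
      have hmono : ((‖lam‖)⁻¹) ^ n ≤ (μ ^ n)⁻¹ := by
        rw [← inv_pow]
        exact pow_le_pow_left₀ (by positivity) (inv_anti₀ hμ hcon) n
      have h5 := hcc n
      rw [e1] at h5
      have h6 : ‖(lam⁻¹ ^ n * ζ₀).re • u - (lam⁻¹ ^ n * ζ₀).im • w‖
          ≤ K * (μ ^ n)⁻¹ := by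
        rw [habsζ] at hup
        calc ‖(lam⁻¹ ^ n * ζ₀).re • u - (lam⁻¹ ^ n * ζ₀).im • w‖
            ≤ K * ((‖lam‖)⁻¹) ^ n := hup
          _ ≤ K * (μ ^ n)⁻¹ := mul_le_mul_of_nonneg_left hmono hK0
      have hn1 : (1 : ℝ) ≤ (μ ^ n)⁻¹ := hinv1 μ hμ (h3.trans h4) n
      nlinarith
    obtain ⟨n, hn⟩ := pow_unbounded_of_one_lt ((c' + 2 * C + K) / c)
      ((one_lt_div h1).2 h2)
    have h5 := key n
    have h6 : c * (μbar ^ n)⁻¹ * μbar ^ n ≤ (c' + 2 * C + K) * (μ ^ n)⁻¹ * μbar ^ n :=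
      mul_le_mul_of_nonneg_right h5 (pow_nonneg h1.le n)
    have h7 : c * (μbar ^ n)⁻¹ * μbar ^ n = c := by field_simp
    have h8 : (c' + 2 * C + K) * (μ ^ n)⁻¹ * μbar ^ n
        = (c' + 2 * C + K) * (μbar / μ) ^ n := by
      rw [div_pow, div_eq_mul_inv]; ring
    rw [h7, h8] at h6
    -- from hn : (c'+2C+K)/c < (μ/μbar)^n derive contradiction
    have h9 : c' + 2 * C + K < c * (μ / μbar) ^ n := by
      rw [div_lt_iff₀ hc] at hn
      linarith
    have h10 : (μbar / μ) ^ n * (μ / μbar) ^ n = 1 := by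
      rw [← mul_pow, div_mul_div_comm, mul_comm μbar μ, div_self (by positivity), one_pow]
    have hpow : 0 < (μ / μbar) ^ n := by positivity
    nlinarith
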